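/- Any non-signaling strategy for the CHSH_n game satisfying Pr[X = 0 | A = 0] = 1 is a convex combination of deterministic classical strategies, i.e., of non-signaling strategies in which Pr[X = 0 | A = a] and Pr[Y = 0 | B = b] are each 0 or 1 for every a, b. -/

import Mathlib

open Finset
open Fin.NatCast
namespace CHSHAux

noncomputable def qc (μ : Bool → ℝ) (K : ℕ → Bool → Bool → ℝ) (m : ℕ)
    (f : Fin (m+1) → Bool) : ℝ :=
  μ (f 0) * ∏ i : Fin m, K i.val (f i.castSucc) (f i.succ)

noncomputable def nu (μ : Bool → ℝ) (K : ℕ → Bool → Bool → ℝ) : ℕ → Bool → ℝ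
  | 0 => μ
  | j+1 => fun v => ∑ u, nu μ K j u * K j u v

lemma qc_nonneg (μ : Bool → ℝ) (K : ℕ → Bool → Bool → ℝ)
    (hμ : ∀ u, 0 ≤ μ u) (hK : ∀ i u v, 0 ≤ K i u v) (m : ℕ) (f : Fin (m+1) → Bool) :
    0 ≤ qc μ K m f :=
  mul_nonneg (hμ _) (Finset.prod_nonneg fun _ _ => hK _ _ _)

lemma snoc_bijective (m : ℕ) :
    Function.Bijective (fun gv : (Fin (m+1) → Bool) × Bool => (Fin.snoc gv.1 gv.2 : Fin (m+2) → Bool)) := by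
  rw [Fintype.bijective_iff_injective_and_card]
  constructor
  · rintro ⟨g, v⟩ ⟨g', v'⟩ h
    simp only at h
    have h1 : g = g' := by
      funext i
      have := congrFun h i.castSucc
      simpa using this
    have h2 : v = v' := by
      have := congrFun h (Fin.last (m+1))
      simpa using this
    simp [h1, h2]
  · simp [Fintype.card_fun, pow_succ, mul_comm]

lemma sum_snoc (m : ℕ) (F : (Fin (m+2) → Bool) → ℝ) :
    ∑ f, F f = ∑ g : Fin (m+1) → Bool, ∑ v, F (Fin.snoc g v) := by
  rw [← (snoc_bijective m).sum_comp F, Fintype.sum_prod_type]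

lemma qc_snoc (μ : Bool → ℝ) (K : ℕ → Bool → Bool → ℝ) (m : ℕ)
    (g : Fin (m+1) → Bool) (v : Bool) :
    qc μ K (m+1) (Fin.snoc g v) = qc μ K m g * K m (g (Fin.last m)) v := by
  unfold qc
  rw [Fin.prod_univ_castSucc]
  have h0 : (Fin.snoc g v : Fin (m+2) → Bool) 0 = g 0 := by
    rw [← Fin.castSucc_zero, Fin.snoc_castSucc]
  have hterm : ∀ i : Fin m,
      K (i.castSucc).val ((Fin.snoc g v : Fin (m+2) → Bool) i.castSucc.castSucc)
        ((Fin.snoc g v : Fin (m+2) → Bool) i.castSucc.succ)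
      = K i.val (g i.castSucc) (g i.succ) := by
    intro i
    rw [Fin.succ_castSucc, Fin.snoc_castSucc, Fin.snoc_castSucc, Fin.coe_castSucc]
  have hlast : (Fin.snoc g v : Fin (m+2) → Bool) (Fin.last m).succ = v := by
    rw [Fin.succ_last, Fin.snoc_last]
  rw [h0, hlast, Fin.snoc_castSucc]
  rw [Finset.prod_congr rfl (fun i _ => hterm i)]
  simp [Fin.val_last]
  ring


lemma qc_marginal (μ : Bool → ℝ) (K : ℕ → Bool → Bool → ℝ)
    (hK1 : ∀ i u, ∑ v, K i u v = 1) :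
    ∀ m j (hj : j ≤ m) (v : Bool),
      ∑ f : Fin (m+1) → Bool, qc μ K m f * (if f ⟨j, by omega⟩ = v then 1 else 0)
        = nu μ K j v := by
  intro m
  induction m with
  | zero =>
    intro j hj v
    obtain rfl : j = 0 := by omega
    rw [← (Equiv.funUnique (Fin 1) Bool).symm.sum_comp]
    simp only [Equiv.funUnique_symm_apply]
    show ∑ b : Bool, qc μ K 0 (fun _ => b) * (if b = v then 1 else 0) = nu μ K 0 v
    simp only [qc, nu, Fintype.sum_bool]
    cases v <;> simp
  | succ m ih =>
    intro j hj v
    rw [sum_snoc]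
    by_cases hjm : j ≤ m
    · have hcast : ∀ (g : Fin (m+1) → Bool) (v' : Bool),
          (Fin.snoc g v' : Fin (m+2) → Bool) ⟨j, by omega⟩ = g ⟨j, by omega⟩ := by
        intro g v'
        have h : (⟨j, by omega⟩ : Fin (m+2)) = Fin.castSucc ⟨j, by omega⟩ := rfl
        rw [h, Fin.snoc_castSucc]
      calc ∑ g : Fin (m+1) → Bool, ∑ v', qc μ K (m+1) (Fin.snoc g v') *
              (if (Fin.snoc g v' : Fin (m+2) → Bool) ⟨j, by omega⟩ = v then 1 else 0)
          = ∑ g : Fin (m+1) → Bool,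
              (qc μ K m g * (if g ⟨j, by omega⟩ = v then 1 else 0)) *
                ∑ v', K m (g (Fin.last m)) v' := by
            refine Finset.sum_congr rfl fun g _ => ?_
            rw [Finset.mul_sum]
            refine Finset.sum_congr rfl fun v' _ => ?_
            rw [qc_snoc, hcast g v']
            ring
        _ = nu μ K j v := by
            rw [Finset.sum_congr rfl fun g _ => by rw [hK1, mul_one]]
            exact ih j hjm v
    · obtain rfl : j = m + 1 := by omega
      have hlast : ∀ (g : Fin (m+1) → Bool) (v' : Bool),
          (Fin.snoc g v' : Fin (m+2) → Bool) ⟨m+1, by omega⟩ = v' := by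
        intro g v'
        have h : (⟨m+1, by omega⟩ : Fin (m+2)) = Fin.last (m+1) := rfl
        rw [h, Fin.snoc_last]
      calc ∑ g : Fin (m+1) → Bool, ∑ v', qc μ K (m+1) (Fin.snoc g v') *
              (if (Fin.snoc g v' : Fin (m+2) → Bool) ⟨m+1, by omega⟩ = v then 1 else 0)
          = ∑ g : Fin (m+1) → Bool, qc μ K m g * K m (g (Fin.last m)) v := by
            refine Finset.sum_congr rfl fun g _ => ?_
            rw [Finset.sum_congr rfl fun v' _ => by rw [qc_snoc, hlast g v']]
            rw [Fintype.sum_bool]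
            cases v <;> simp
        _ = ∑ g : Fin (m+1) → Bool, ∑ t,
              (qc μ K m g * (if g ⟨m, by omega⟩ = t then 1 else 0)) * K m t v := by
            refine Finset.sum_congr rfl fun g _ => ?_
            have h : g (Fin.last m) = g ⟨m, by omega⟩ := rfl
            rw [h]
            cases hg : g ⟨m, by omega⟩ <;> simp [Fintype.sum_bool, hg]
        _ = ∑ t, (∑ g : Fin (m+1) → Bool,
              qc μ K m g * (if g ⟨m, by omega⟩ = t then 1 else 0)) * K m t v := by
            rw [Finset.sum_comm]
            exact Finset.sum_congr rfl fun t _ => (Finset.sum_mul _ _ _).symm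
        _ = nu μ K (m+1) v := by
            refine Finset.sum_congr rfl fun t _ => ?_
            rw [ih m le_rfl t]

lemma qc_total (μ : Bool → ℝ) (K : ℕ → Bool → Bool → ℝ)
    (hK1 : ∀ i u, ∑ v, K i u v = 1) (m : ℕ) :
    ∑ f : Fin (m+1) → Bool, qc μ K m f = ∑ u, μ u := by
  have h : ∀ f : Fin (m+1) → Bool,
      qc μ K m f = ∑ v, qc μ K m f * (if f ⟨0, by omega⟩ = v then 1 else 0) := by
    intro f
    cases hf : f ⟨0, by omega⟩ <;> simp [Fintype.sum_bool, hf]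
  rw [Finset.sum_congr rfl fun f _ => h f, Finset.sum_comm]
  exact Finset.sum_congr rfl fun v _ => qc_marginal μ K hK1 m 0 (by omega) v

lemma qc_pair (μ : Bool → ℝ) (K : ℕ → Bool → Bool → ℝ)
    (hK1 : ∀ i u, ∑ v, K i u v = 1) :
    ∀ m i (hi : i + 1 ≤ m) (u v : Bool),
      ∑ f : Fin (m+1) → Bool, qc μ K m f * (if f ⟨i, by omega⟩ = u then 1 else 0)
          * (if f ⟨i+1, by omega⟩ = v then 1 else 0)
        = nu μ K i u * K i u v := by
  intro m
  induction m with
  | zero => intro i hi; omega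
  | succ m ih =>
    intro i hi u v
    rw [sum_snoc]
    by_cases him : i + 1 ≤ m
    · have hc1 : ∀ (g : Fin (m+1) → Bool) (v' : Bool),
          (Fin.snoc g v' : Fin (m+2) → Bool) ⟨i, by omega⟩ = g ⟨i, by omega⟩ := by
        intro g v'
        have h : (⟨i, by omega⟩ : Fin (m+2)) = Fin.castSucc ⟨i, by omega⟩ := rfl
        rw [h, Fin.snoc_castSucc]
      have hc2 : ∀ (g : Fin (m+1) → Bool) (v' : Bool),
          (Fin.snoc g v' : Fin (m+2) → Bool) ⟨i+1, by omega⟩ = g ⟨i+1, by omega⟩ := by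
        intro g v'
        have h : (⟨i+1, by omega⟩ : Fin (m+2)) = Fin.castSucc ⟨i+1, by omega⟩ := rfl
        rw [h, Fin.snoc_castSucc]
      calc ∑ g : Fin (m+1) → Bool, ∑ v', qc μ K (m+1) (Fin.snoc g v') *
              (if (Fin.snoc g v' : Fin (m+2) → Bool) ⟨i, by omega⟩ = u then 1 else 0) *
              (if (Fin.snoc g v' : Fin (m+2) → Bool) ⟨i+1, by omega⟩ = v then 1 else 0)
          = ∑ g : Fin (m+1) → Bool,
              (qc μ K m g * (if g ⟨i, by omega⟩ = u then 1 else 0)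
                * (if g ⟨i+1, by omega⟩ = v then 1 else 0)) *
                ∑ v', K m (g (Fin.last m)) v' := by
            refine Finset.sum_congr rfl fun g _ => ?_
            rw [Finset.mul_sum]
            refine Finset.sum_congr rfl fun v' _ => ?_
            rw [qc_snoc, hc1 g v', hc2 g v']
            ring
        _ = nu μ K i u * K i u v := by
            rw [Finset.sum_congr rfl fun g _ => by rw [hK1, mul_one]]
            exact ih i him u v
    · obtain rfl : m = i := by omega
      have hc1 : ∀ (g : Fin (m+1) → Bool) (v' : Bool),
          (Fin.snoc g v' : Fin (m+2) → Bool) ⟨m, by omega⟩ = g ⟨m, by omega⟩ := by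
        intro g v'
        have h : (⟨m, by omega⟩ : Fin (m+2)) = Fin.castSucc ⟨m, by omega⟩ := rfl
        rw [h, Fin.snoc_castSucc]
      have hc2 : ∀ (g : Fin (m+1) → Bool) (v' : Bool),
          (Fin.snoc g v' : Fin (m+2) → Bool) ⟨m+1, by omega⟩ = v' := by
        intro g v'
        have h : (⟨m+1, by omega⟩ : Fin (m+2)) = Fin.last (m+1) := rfl
        rw [h, Fin.snoc_last]
      calc ∑ g : Fin (m+1) → Bool, ∑ v', qc μ K (m+1) (Fin.snoc g v') *
              (if (Fin.snoc g v' : Fin (m+2) → Bool) ⟨m, by omega⟩ = u then 1 else 0) *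
              (if (Fin.snoc g v' : Fin (m+2) → Bool) ⟨m+1, by omega⟩ = v then 1 else 0)
          = ∑ g : Fin (m+1) → Bool,
              (qc μ K m g * (if g ⟨m, by omega⟩ = u then 1 else 0)) * K m u v := by
            refine Finset.sum_congr rfl fun g _ => ?_
            rw [Finset.sum_congr rfl fun v' _ => by rw [qc_snoc, hc1 g v', hc2 g v']]
            have h : g (Fin.last m) = g ⟨m, by omega⟩ := rfl
            rw [h]
            cases hg : g ⟨m, by omega⟩ <;> cases u <;> cases v <;>
              simp [Fintype.sum_bool, hg] <;> ring
        _ = nu μ K m u * K m u v := by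
            rw [← Finset.sum_mul, qc_marginal μ K hK1 m m le_rfl u]


variable (n : ℕ) [NeZero n] (p : Fin n → Fin n → Bool → Bool → ℝ)

def mX (a : Fin n) (x : Bool) : ℝ := ∑ y, p a a x y
def mY (b : Fin n) (y : Bool) : ℝ := ∑ x, p b b x y

noncomputable def Sc (a : Fin n) (x y : Bool) : ℝ :=
  if mX n p a x = 0 then 1/2 else p a (a+1) x y / mX n p a x

noncomputable def Tc (a : Fin n) (y x : Bool) : ℝ :=
  if mY n p a y = 0 then 1/2 else p a a x y / mY n p a y

noncomputable def Kc (j : ℕ) (u v : Bool) : ℝ :=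
  if j % 2 = 0 then Sc n p ((j/2 : ℕ) : Fin n) u v
  else Tc n p (((j+1)/2 : ℕ) : Fin n) u v

def mu0 : Bool → ℝ := fun u => if u = false then 1 else 0

section lemmas
variable (hnn : ∀ a b x y, (b = a ∨ b = a + 1) → 0 ≤ p a b x y)
  (hnsA : ∀ a x, ∑ y : Bool, p a a x y = ∑ y : Bool, p a (a + 1) x y)

include hnn in
lemma mX_nonneg (a : Fin n) (x : Bool) : 0 ≤ mX n p a x :=
  Finset.sum_nonneg fun y _ => hnn a a x y (Or.inl rfl)

include hnn in
lemma mY_nonneg (b : Fin n) (y : Bool) : 0 ≤ mY n p b y :=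
  Finset.sum_nonneg fun x _ => hnn b b x y (Or.inl rfl)

include hnn in
lemma Sc_nonneg (a : Fin n) (x y : Bool) : 0 ≤ Sc n p a x y := by
  unfold Sc
  split
  · norm_num
  · exact div_nonneg (hnn a (a+1) x y (Or.inr rfl)) (mX_nonneg n p hnn a x)

include hnn in
lemma Tc_nonneg (a : Fin n) (y x : Bool) : 0 ≤ Tc n p a y x := by
  unfold Tc
  split
  · norm_num
  · exact div_nonneg (hnn a a x y (Or.inl rfl)) (mY_nonneg n p hnn a y)

include hnsA in
lemma Sc_sum (a : Fin n) (x : Bool) : ∑ y, Sc n p a x y = 1 := by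
  unfold Sc
  split
  · simp [Fintype.sum_bool]
  · rw [← Finset.sum_div, ← hnsA a x]
    exact div_self ‹¬ mX n p a x = 0›

lemma Tc_sum (a : Fin n) (y : Bool) (h : True) : ∑ x, Tc n p a y x = 1 := by
  unfold Tc
  split
  · simp [Fintype.sum_bool]
  · rw [← Finset.sum_div]
    exact div_self ‹¬ mY n p a y = 0›

include hnn hnsA in
lemma recS (a : Fin n) (x y : Bool) : mX n p a x * Sc n p a x y = p a (a+1) x y := by
  unfold Sc
  split
  · rename_i h
    rw [h, zero_mul]
    have hle : p a (a+1) x y ≤ ∑ y', p a (a+1) x y' :=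
      Finset.single_le_sum (fun y' _ => hnn a (a+1) x y' (Or.inr rfl)) (Finset.mem_univ y)
    rw [← hnsA a x] at hle
    have := hnn a (a+1) x y (Or.inr rfl)
    have : p a (a+1) x y ≤ 0 := by rw [← h]; exact hle
    linarith [hnn a (a+1) x y (Or.inr rfl)]
  · rw [mul_div_cancel₀]
    assumption

include hnn in
lemma recT (a : Fin n) (x y : Bool) : mY n p a y * Tc n p a y x = p a a x y := by
  unfold Tc
  split
  · rename_i h
    rw [h, zero_mul]
    have hle : p a a x y ≤ ∑ x', p a a x' y :=
      Finset.single_le_sum (fun x' _ => hnn a a x' y (Or.inl rfl)) (Finset.mem_univ x)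
    have : p a a x y ≤ 0 := by rw [← h]; exact hle
    linarith [hnn a a x y (Or.inl rfl)]
  · rw [mul_div_cancel₀]
    assumption

end lemmas


section evalsec
variable (hn : 2 ≤ n)
  (hnn : ∀ a b x y, (b = a ∨ b = a + 1) → 0 ≤ p a b x y)
  (hsum : ∀ a b, (b = a ∨ b = a + 1) → ∑ x : Bool, ∑ y : Bool, p a b x y = 1)
  (hnsA : ∀ a x, ∑ y : Bool, p a a x y = ∑ y : Bool, p a (a + 1) x y)
  (hnsB : ∀ b y, ∑ x : Bool, p b b x y = ∑ x : Bool, p (b - 1) b x y)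
  (hfix : ∀ b : Fin n, (b = 0 ∨ b = 0 + 1) → ∑ y : Bool, p 0 b false y = 1)

lemma Kc_even (k : ℕ) (u v : Bool) : Kc n p (2*k) u v = Sc n p ((k : ℕ) : Fin n) u v := by
  unfold Kc
  rw [if_pos (by omega)]
  congr 2
  omega

lemma Kc_odd (k : ℕ) (u v : Bool) : Kc n p (2*k+1) u v = Tc n p ((k+1 : ℕ) : Fin n) u v := by
  unfold Kc
  rw [if_neg (by omega)]
  congr 2
  omega

include hnsA hnn in
lemma Kc_sum (j : ℕ) (u : Bool) : ∑ v, Kc n p j u v = 1 := by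
  unfold Kc
  split
  · exact Sc_sum n p hnsA _ u
  · exact Tc_sum n p _ u trivial

include hnn in
lemma Kc_nonneg (j u v) : 0 ≤ Kc n p j u v := by
  unfold Kc
  split
  · exact Sc_nonneg n p hnn _ u v
  · exact Tc_nonneg n p hnn _ u v

include hfix in
lemma mX0f : mX n p 0 false = 1 := hfix 0 (Or.inl rfl)

include hfix hsum in
lemma mX0t : mX n p 0 true = 0 := by
  have h := hsum 0 0 (Or.inl rfl)
  rw [Fintype.sum_bool] at h
  have h1 := mX0f n p hfix
  unfold mX at *
  linarith

include hfix hsum hnn in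
lemma p00t (y : Bool) : p 0 0 true y = 0 := by
  have h := mX0t n p hsum hfix
  unfold mX at h
  have hle : p 0 0 true y ≤ ∑ y', p 0 0 true y' :=
    Finset.single_le_sum (fun y' _ => hnn 0 0 true y' (Or.inl rfl)) (Finset.mem_univ y)
  have := hnn 0 0 true y (Or.inl rfl)
  linarith

include hfix hsum hnn hnsA in
lemma p01t (y : Bool) : p 0 (0+1) true y = 0 := by
  have h := mX0t n p hsum hfix
  unfold mX at h
  rw [hnsA 0 true] at h
  have hle : p 0 (0+1) true y ≤ ∑ y', p 0 (0+1) true y' :=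
    Finset.single_le_sum (fun y' _ => hnn 0 (0+1) true y' (Or.inr rfl)) (Finset.mem_univ y)
  have := hnn 0 (0+1) true y (Or.inr rfl)
  linarith

include hn hnn hsum hnsA hnsB hfix in
lemma nu_eval : ∀ k, k < n →
    (∀ x, nu (mu0) (Kc n p) (2*k) x = mX n p ((k : ℕ) : Fin n) x) ∧
    (∀ y, nu (mu0) (Kc n p) (2*k+1) y = mY n p ((k+1 : ℕ) : Fin n) y) := by
  intro k
  induction k with
  | zero =>
    intro _
    constructor
    · intro x
      show mu0 x = mX n p ((0:ℕ) : Fin n) x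
      rw [Nat.cast_zero]
      cases x
      · rw [mX0f n p hfix]; rfl
      · rw [mX0t n p hsum hfix]; rfl
    · intro y
      show ∑ u, mu0 u * Kc n p 0 u y = mY n p ((1:ℕ) : Fin n) y
      have hK0 : ∀ u v, Kc n p 0 u v = Sc n p 0 u v := by
        intro u v
        have := Kc_even n p 0 u v
        rwa [Nat.cast_zero] at this
      rw [Fintype.sum_bool, hK0, hK0]
      have hmu : mu0 true = 0 := rfl
      have hmu2 : mu0 false = 1 := rfl
      rw [hmu, hmu2, zero_mul, one_mul, zero_add]
      have hS : Sc n p 0 false y = p 0 (0+1) false y := by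
        unfold Sc
        rw [if_neg (by rw [mX0f n p hfix]; norm_num), mX0f n p hfix, div_one]
      rw [hS]
      have hb := hnsB ((1:ℕ) : Fin n) y
      have h1 : ((1:ℕ) : Fin n) - 1 = 0 := by push_cast; open Fin.CommRing in ring
      rw [h1] at hb
      unfold mY
      rw [hb]
      have h01 : (0 : Fin n) + 1 = ((1:ℕ) : Fin n) := by push_cast; open Fin.CommRing in ring
      rw [Fintype.sum_bool, ← h01, p01t n p hnn hsum hnsA hfix y]
      ring
  | succ k ih =>
    intro hk1
    have ihk := ih (by omega)
    have hfst : ∀ x, nu (mu0) (Kc n p) (2*(k+1)) x = mX n p ((k+1 : ℕ) : Fin n) x := by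
      intro x
      have h21 : 2*(k+1) = (2*k+1)+1 := by ring
      rw [h21]
      show ∑ u, nu (mu0) (Kc n p) (2*k+1) u * Kc n p (2*k+1) u x = _
      calc ∑ u, nu (mu0) (Kc n p) (2*k+1) u * Kc n p (2*k+1) u x
          = ∑ u, mY n p ((k+1:ℕ) : Fin n) u * Tc n p ((k+1:ℕ) : Fin n) u x := by
            refine Finset.sum_congr rfl fun u _ => ?_
            rw [ihk.2 u, Kc_odd]
        _ = ∑ u, p ((k+1:ℕ) : Fin n) ((k+1:ℕ) : Fin n) x u := by
            refine Finset.sum_congr rfl fun u _ => ?_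
            rw [recT n p hnn]
        _ = mX n p ((k+1:ℕ) : Fin n) x := rfl
    refine ⟨hfst, ?_⟩
    intro y
    show ∑ u, nu (mu0) (Kc n p) (2*(k+1)) u * Kc n p (2*(k+1)) u y = _
    calc ∑ u, nu (mu0) (Kc n p) (2*(k+1)) u * Kc n p (2*(k+1)) u y
        = ∑ u, mX n p ((k+1:ℕ) : Fin n) u * Sc n p ((k+1:ℕ) : Fin n) u y := by
          refine Finset.sum_congr rfl fun u _ => ?_
          rw [hfst u, show (2*(k+1)) = 2*(k+1) from rfl, Kc_even]
      _ = ∑ u, p ((k+1:ℕ) : Fin n) (((k+1:ℕ) : Fin n) + 1) u y := by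
          refine Finset.sum_congr rfl fun u _ => ?_
          rw [recS n p hnn hnsA]
      _ = mY n p ((k+2 : ℕ) : Fin n) y := by
          have hc : ((k+1:ℕ) : Fin n) + 1 = ((k+2 : ℕ) : Fin n) := by push_cast; open Fin.CommRing in ring
          have hb := hnsB ((k+2:ℕ) : Fin n) y
          have hc2 : ((k+2:ℕ) : Fin n) - 1 = ((k+1:ℕ) : Fin n) := by push_cast; open Fin.CommRing in ring
          rw [hc2] at hb
          unfold mY
          rw [hb, ← hc]
end evalsec


def vY (n : ℕ) (b : Fin n) : ℕ := if b.val = 0 then 2*n-1 else 2*b.val - 1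

lemma vY_lt (n : ℕ) (hn : 2 ≤ n) (b : Fin n) : vY n b < 2*n-1+1 := by
  have := b.isLt
  unfold vY
  split <;> omega

def enc (n : ℕ) (hn : 2 ≤ n) (P : (Fin n → Bool) × (Fin n → Bool)) :
    Fin (2*n-1+1) → Bool :=
  fun j =>
    if j.val % 2 = 0 then P.1 ⟨j.val/2, by have := j.isLt; omega⟩
    else P.2 ⟨(j.val+1)/2 % n, Nat.mod_lt _ (by omega)⟩

lemma enc_fst (n : ℕ) (hn : 2 ≤ n) (P : (Fin n → Bool) × (Fin n → Bool))
    (a : Fin n) (j : Fin (2*n-1+1)) (hj : j.val = 2*a.val) :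
    enc n hn P j = P.1 a := by
  unfold enc
  rw [if_pos (by omega)]
  exact congrArg P.1 (Fin.ext (by show j.val/2 = a.val; omega))

lemma enc_snd (n : ℕ) (hn : 2 ≤ n) (P : (Fin n → Bool) × (Fin n → Bool))
    (b : Fin n) (j : Fin (2*n-1+1)) (hj : j.val = vY n b) :
    enc n hn P j = P.2 b := by
  unfold enc
  by_cases hb : b.val = 0
  · have hj' : j.val = 2*n-1 := by unfold vY at hj; rwa [if_pos hb] at hj
    rw [if_neg (by omega)]
    have h2 : (j.val+1)/2 = n := by omega
    exact congrArg P.2 (Fin.ext (by show (j.val+1)/2 % n = b.val; rw [h2, Nat.mod_self, hb]))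
  · have hj' : j.val = 2*b.val - 1 := by unfold vY at hj; rwa [if_neg hb] at hj
    have hbpos : 1 ≤ b.val := by omega
    rw [if_neg (by omega)]
    have h2 : (j.val+1)/2 = b.val := by omega
    exact congrArg P.2 (Fin.ext (by show (j.val+1)/2 % n = b.val; rw [h2, Nat.mod_eq_of_lt b.isLt]))

lemma enc_bij (n : ℕ) (hn : 2 ≤ n) : Function.Bijective (enc n hn) := by
  rw [Fintype.bijective_iff_injective_and_card]
  constructor
  · intro P Q h
    refine Prod.ext ?_ ?_
    · funext a
      have ha : (2*a.val) < 2*n-1+1 := by have := a.isLt; omega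
      have e1 := enc_fst n hn P a ⟨2*a.val, ha⟩ rfl
      have e2 := enc_fst n hn Q a ⟨2*a.val, ha⟩ rfl
      rw [← e1, ← e2, h]
    · funext b
      have e1 := enc_snd n hn P b ⟨vY n b, vY_lt n hn b⟩ rfl
      have e2 := enc_snd n hn Q b ⟨vY n b, vY_lt n hn b⟩ rfl
      rw [← e1, ← e2, h]
  · rw [Fintype.card_prod, Fintype.card_fun, Fintype.card_fun]
    simp only [Fintype.card_bool, Fintype.card_fin]
    rw [← pow_add]
    congr 1
    omega


lemma val_add_one' (n : ℕ) [NeZero n] (a : Fin n) : (a + 1).val = (a.val + 1) % n := by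
  have h : a + 1 = ((a.val + 1 : ℕ) : Fin n) := by
    rw [Nat.cast_add, Nat.cast_one, Fin.cast_val_eq_self]
  rw [h, Fin.val_natCast]

lemma vY_succ (n : ℕ) [NeZero n] (hn : 2 ≤ n) (a : Fin n) :
    vY n (a + 1) = 2*a.val + 1 := by
  have hval := val_add_one' n a
  have hlt := a.isLt
  unfold vY
  by_cases h : a.val = n - 1
  · have h0 : (a+1).val = 0 := by
      rw [hval, show a.val + 1 = n by omega, Nat.mod_self]
    rw [if_pos h0]
    omega
  · have h1 : (a+1).val = a.val + 1 := by
      rw [hval, Nat.mod_eq_of_lt (by omega)]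
    rw [if_neg (by omega)]
    omega

end CHSHAux
set_option maxHeartbeats 1000000 in
open CHSHAux Finset in
/-- Any non-signaling strategy for the CHSH_n game (a family `p(x,y|a,b)` over
the valid question pairs `(a,a)` and `(a,a+1)`) satisfying
`Pr[X = 0 | A = 0] = 1` is a convex combination of deterministic classical
strategies, i.e. of non-signaling strategies whose marginals
`Pr[X = 0 | A = a]` and `Pr[Y = 0 | B = b]` are each 0 or 1. -/
theorem chshn_ns_convex_combination (n : ℕ) (hn : 2 ≤ n) [NeZero n]
    (p : Fin n → Fin n → Bool → Bool → ℝ)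
    (hnn : ∀ a b x y, (b = a ∨ b = a + 1) → 0 ≤ p a b x y)
    (hsum : ∀ a b, (b = a ∨ b = a + 1) →
      ∑ x : Bool, ∑ y : Bool, p a b x y = 1)
    (hnsA : ∀ a x, ∑ y : Bool, p a a x y = ∑ y : Bool, p a (a + 1) x y)
    (hnsB : ∀ b y, ∑ x : Bool, p b b x y = ∑ x : Bool, p (b - 1) b x y)
    (hfix : ∀ b : Fin n, (b = 0 ∨ b = 0 + 1) → ∑ y : Bool, p 0 b false y = 1) :
    ∃ (m : ℕ) (w : Fin m → ℝ) (d : Fin m → Fin n → Fin n → Bool → Bool → ℝ),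
      (∀ i, 0 ≤ w i) ∧ (∑ i, w i = 1) ∧
      (∀ i, (∀ a b x y, (b = a ∨ b = a + 1) → 0 ≤ d i a b x y) ∧
        (∀ a b, (b = a ∨ b = a + 1) →
          ∑ x : Bool, ∑ y : Bool, d i a b x y = 1) ∧
        (∀ a x, ∑ y : Bool, d i a a x y = ∑ y : Bool, d i a (a + 1) x y) ∧
        (∀ b y, ∑ x : Bool, d i b b x y = ∑ x : Bool, d i (b - 1) b x y) ∧
        (∀ a, (∑ y : Bool, d i a a false y = 0) ∨ (∑ y : Bool, d i a a false y = 1)) ∧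
        (∀ b, (∑ x : Bool, d i b b x false = 0) ∨ (∑ x : Bool, d i b b x false = 1))) ∧
      (∀ a b x y, (b = a ∨ b = a + 1) →
        p a b x y = ∑ i, w i * d i a b x y) := by
  have hK1 : ∀ i u, ∑ v, Kc n p i u v = 1 := Kc_sum n p hnn hnsA
  have hKnn : ∀ i u v, 0 ≤ Kc n p i u v := Kc_nonneg n p hnn
  have hmu0 : ∀ u, 0 ≤ mu0 u := by
    intro u; unfold mu0; split <;> norm_num
  have hmusum : ∑ u, mu0 u = 1 := by
    rw [Fintype.sum_bool]; norm_num [mu0]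
  have h00 : (0 : Fin (2*n-1+1)) = ⟨0, by omega⟩ := Fin.ext (Fin.val_zero _)
  -- the key marginal computation
  have main : ∀ (a b : Fin n) (x y : Bool), (b = a ∨ b = a + 1) →
      ∑ P : (Fin n → Bool) × (Fin n → Bool),
        qc mu0 (Kc n p) (2*n-1) (enc n hn P) *
          ((if P.1 a = x then 1 else 0) * (if P.2 b = y then 1 else 0))
        = p a b x y := by
    intro a b x y hab
    have key : ∀ (ja jb : Fin (2*n-1+1)), ja.val = 2*a.val → jb.val = vY n b →
        ∑ P : (Fin n → Bool) × (Fin n → Bool),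
          qc mu0 (Kc n p) (2*n-1) (enc n hn P) *
            ((if P.1 a = x then 1 else 0) * (if P.2 b = y then 1 else 0))
        = ∑ f : Fin (2*n-1+1) → Bool,
            qc mu0 (Kc n p) (2*n-1) f * (if f ja = x then 1 else 0)
              * (if f jb = y then 1 else 0) := by
      intro ja jb hja hjb
      rw [← (enc_bij n hn).sum_comp (fun f => qc mu0 (Kc n p) (2*n-1) f *
        (if f ja = x then 1 else 0) * (if f jb = y then 1 else 0))]
      refine Finset.sum_congr rfl fun P _ => ?_
      rw [enc_fst n hn P a ja hja, enc_snd n hn P b jb hjb]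
      ring
    rcases hab with hb | hb
    · subst hb
      by_cases ha : b = 0
      · subst ha
        rw [key ⟨0, by omega⟩ ⟨2*n-1, by omega⟩
          (by simp) (by show 2*n-1 = vY n 0; unfold vY; rw [if_pos (Fin.val_zero n)])]
        cases x
        · -- x = false
          have hstep : ∀ f : Fin (2*n-1+1) → Bool,
              qc mu0 (Kc n p) (2*n-1) f * (if f ⟨0, by omega⟩ = false then 1 else 0)
                * (if f ⟨2*n-1, by omega⟩ = y then 1 else 0)
              = qc mu0 (Kc n p) (2*n-1) f * (if f ⟨2*n-1, by omega⟩ = y then 1 else 0) := by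
            intro f
            by_cases hf : f ⟨0, by omega⟩ = false
            · rw [if_pos hf]; ring
            · have hq : qc mu0 (Kc n p) (2*n-1) f = 0 := by
                unfold qc
                rw [h00, eq_true_of_ne_false hf]
                show mu0 true * _ = 0
                rw [show mu0 true = 0 from rfl, zero_mul]
              rw [hq]; ring
          rw [Finset.sum_congr rfl fun f _ => hstep f]
          rw [qc_marginal mu0 (Kc n p) hK1 (2*n-1) (2*n-1) le_rfl y]
          have hnu := (nu_eval n p hn hnn hsum hnsA hnsB hfix (n-1) (by omega)).2 y
          rw [show 2*(n-1)+1 = 2*n-1 by omega, show n-1+1 = n by omega,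
            Fin.natCast_self] at hnu
          rw [hnu]
          show mY n p 0 y = p 0 0 false y
          unfold mY
          rw [Fintype.sum_bool, p00t n p hnn hsum hfix y, zero_add]
        · -- x = true
          rw [p00t n p hnn hsum hfix y]
          refine Finset.sum_eq_zero fun f _ => ?_
          by_cases hf : f ⟨0, by omega⟩ = true
          · have hq : qc mu0 (Kc n p) (2*n-1) f = 0 := by
              unfold qc
              rw [h00, hf]
              show mu0 true * _ = 0
              rw [show mu0 true = 0 from rfl, zero_mul]
            rw [hq]; ring
          · rw [if_neg hf]; ring
      · -- b = b, b ≠ 0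
        have hva : b.val ≠ 0 := fun h => ha (Fin.ext (by rw [h, Fin.val_zero]))
        obtain ⟨c, hc⟩ : ∃ c, b.val = c + 1 := ⟨b.val - 1, by omega⟩
        have hcn : c < n := by have := b.isLt; omega
        rw [key ⟨2*c+1+1, by have := b.isLt; omega⟩ ⟨2*c+1, by have := b.isLt; omega⟩
          (by show 2*c+1+1 = 2*b.val; omega)
          (by show 2*c+1 = vY n b; unfold vY; rw [if_neg hva]; omega)]
        have hcomm : ∀ f : Fin (2*n-1+1) → Bool,
            qc mu0 (Kc n p) (2*n-1) f *
              (if f ⟨2*c+1+1, by have := b.isLt; omega⟩ = x then 1 else 0)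
              * (if f ⟨2*c+1, by have := b.isLt; omega⟩ = y then 1 else 0)
            = qc mu0 (Kc n p) (2*n-1) f *
              (if f ⟨2*c+1, by have := b.isLt; omega⟩ = y then 1 else 0)
              * (if f ⟨2*c+1+1, by have := b.isLt; omega⟩ = x then 1 else 0) :=
          fun f => by ring
        rw [Finset.sum_congr rfl fun f _ => hcomm f]
        rw [qc_pair mu0 (Kc n p) hK1 (2*n-1) (2*c+1) (by have := b.isLt; omega) y x]
        rw [Kc_odd n p c y x]
        have hnu := (nu_eval n p hn hnn hsum hnsA hnsB hfix c hcn).2 y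
        have hca : ((c+1 : ℕ) : Fin n) = b := by
          rw [← hc, Fin.cast_val_eq_self]
        rw [hnu, hca, recT n p hnn b x y]
    · -- b = a + 1
      subst hb
      rw [key ⟨2*a.val, by have := a.isLt; omega⟩ ⟨2*a.val+1, by have := a.isLt; omega⟩
        rfl (by show 2*a.val+1 = vY n (a+1); rw [vY_succ n hn a])]
      rw [qc_pair mu0 (Kc n p) hK1 (2*n-1) (2*a.val) (by have := a.isLt; omega) x y]
      rw [Kc_even n p a.val x y, Fin.cast_val_eq_self]
      have hnu := (nu_eval n p hn hnn hsum hnsA hnsB hfix a.val a.isLt).1 x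
      rw [Fin.cast_val_eq_self] at hnu
      rw [hnu, recS n p hnn hnsA a x y]
  -- the construction
  obtain ⟨N, ⟨e⟩⟩ : ∃ N : ℕ,
      Nonempty (Fin N ≃ ((Fin n → Bool) × (Fin n → Bool))) :=
    ⟨_, ⟨(Fintype.equivFin _).symm⟩⟩
  refine ⟨N, fun i => qc mu0 (Kc n p) (2*n-1) (enc n hn (e i)),
    fun i a b x y => (if (e i).1 a = x then 1 else 0) * (if (e i).2 b = y then 1 else 0),
    ?_, ?_, ?_, ?_⟩
  · intro i
    exact qc_nonneg mu0 (Kc n p) hmu0 hKnn _ _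
  · calc ∑ i, qc mu0 (Kc n p) (2*n-1) (enc n hn (e i))
        = ∑ P : (Fin n → Bool) × (Fin n → Bool), qc mu0 (Kc n p) (2*n-1) (enc n hn P) := Equiv.sum_comp e (fun P => qc mu0 (Kc n p) (2*n-1) (enc n hn P))
      _ = ∑ f : Fin (2*n-1+1) → Bool, qc mu0 (Kc n p) (2*n-1) f :=
          (enc_bij n hn).sum_comp _
      _ = ∑ u, mu0 u := qc_total mu0 (Kc n p) hK1 (2*n-1)
      _ = 1 := hmusum
  · intro i
    refine ⟨?_, ?_, ?_, ?_, ?_, ?_⟩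
    · intro a b x y _
      apply mul_nonneg <;> split <;> norm_num
    · intro a b _
      cases hX : (e i).1 a <;> cases hY : (e i).2 b <;>
        simp [Fintype.sum_bool, hX, hY]
    · intro a x
      cases hX : (e i).1 a <;> cases hY1 : (e i).2 a <;> cases hY2 : (e i).2 (a+1) <;>
        simp [Fintype.sum_bool, hX, hY1, hY2]
    · intro b y
      cases hY : (e i).2 b <;> cases h1 : (e i).1 b <;> cases h2 : (e i).1 (b-1) <;>
        simp [Fintype.sum_bool, hY, h1, h2]
    · intro a
      cases hX : (e i).1 a <;> cases hY : (e i).2 a <;>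
        simp [Fintype.sum_bool, hX, hY]
    · intro b
      cases hX : (e i).1 b <;> cases hY : (e i).2 b <;>
        simp [Fintype.sum_bool, hX, hY]
  · intro a b x y hab
    rw [← main a b x y hab]
    exact (Equiv.sum_comp e (fun P => qc mu0 (Kc n p) (2*n-1) (enc n hn P) *
      ((if P.1 a = x then 1 else 0) * (if P.2 b = y then 1 else 0)))).symm
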